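/- Assume V₀ < d₀²/4, let X be the unique solution of X = V(A + X) with ‖X‖ ≤ r_min, and set H₁ = A + X. Then for every z ∈ ℂ with dist(z, σ(A)) ≤ d₀/2 the operator W(z) = I − ∫₀¹ γ'(t) (γ(t) − z)⁻¹ · K(γ(t)) ∘ (H₁ − γ(t))⁻¹ dt is boundedly invertible on H. -/

import Mathlib

open MeasureTheory Metric Set

noncomputable section

variable {H : Type*} [NormedAddCommGroup H] [InnerProductSpace ℂ H] [CompleteSpace H]

/-- `d₀ = inf_{t ∈ [0,1]} dist (γ t, σ(A))`. -/
noncomputable def curveDist (A : H →L[ℂ] H) (γ : ℝ → ℂ) : ℝ :=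
  ⨅ t : Set.Icc (0 : ℝ) 1, Metric.infDist (γ t) (spectrum ℂ A)

/-- `V₀ = ∫₀¹ |γ'(t)| ‖K(γ(t))‖ dt`. -/
noncomputable def curveVar (K : ℂ → H →L[ℂ] H) (γ : ℝ → ℂ) : ℝ :=
  ∫ t in (0:ℝ)..1, ‖derivWithin γ (Set.Icc 0 1) t‖ * ‖K (γ t)‖

/-- `V(Y) = ∫₀¹ γ'(t) • K(γ(t)) ∘ (Y − γ(t))⁻¹ dt` (Bochner integral in `B(H)`). -/
noncomputable def Vmap (K : ℂ → H →L[ℂ] H) (γ : ℝ → ℂ) (Y : H →L[ℂ] H) : H →L[ℂ] H :=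
  ∫ t in (0:ℝ)..1, derivWithin γ (Set.Icc 0 1) t •
    (K (γ t) ∘L Ring.inverse (Y - γ t • (1 : H →L[ℂ] H)))

/-- `r_min = d₀/2 − √(d₀²/4 − V₀)`. -/
noncomputable def rMin (A : H →L[ℂ] H) (K : ℂ → H →L[ℂ] H) (γ : ℝ → ℂ) : ℝ :=
  curveDist A γ / 2 - Real.sqrt ((curveDist A γ) ^ 2 / 4 - curveVar K γ)

/-- `V₁(z) = ∫₀¹ γ'(t) (z − γ(t))⁻¹ • K(γ(t)) dt`. -/
noncomputable def V1 (K : ℂ → H →L[ℂ] H) (γ : ℝ → ℂ) (z : ℂ) : H →L[ℂ] H :=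
  ∫ t in (0:ℝ)..1, (derivWithin γ (Set.Icc 0 1) t * (z - γ t)⁻¹) • K (γ t)

/-- The continued transfer function `M(z) = A − z + V₁(z)`. -/
noncomputable def Mfun (A : H →L[ℂ] H) (K : ℂ → H →L[ℂ] H) (γ : ℝ → ℂ) (z : ℂ) :
    H →L[ℂ] H :=
  A - z • (1 : H →L[ℂ] H) + V1 K γ z

/-- `W(z) = I − ∫₀¹ γ'(t) (γ(t) − z)⁻¹ • K(γ(t)) ∘ (H₁ − γ(t))⁻¹ dt`. -/
noncomputable def Wfun (K : ℂ → H →L[ℂ] H) (γ : ℝ → ℂ) (H₁ : H →L[ℂ] H) (z : ℂ) :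
    H →L[ℂ] H :=
  1 - ∫ t in (0:ℝ)..1, (derivWithin γ (Set.Icc 0 1) t * (γ t - z)⁻¹) •
    (K (γ t) ∘L Ring.inverse (H₁ - γ t • (1 : H →L[ℂ] H)))

/-- Inverses of commuting (two-sided) units commute. -/
lemma sandwich_comm {M : Type*} [Monoid M] {a b x : M} (hab : a * b = 1) (hba : b * a = 1)
    (h : a * x = x * a) : b * x = x * b := by
  calc b * x = b * x * (a * b) := by rw [hab, mul_one]
    _ = b * (x * a) * b := by simp only [mul_assoc]
    _ = b * (a * x) * b := by rw [h]
    _ = (b * a) * (x * b) := by simp only [mul_assoc]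
    _ = x * b := by rw [hba, one_mul]

/-- Sharp resolvent bound for a self-adjoint operator. -/
lemma resolvent_bound [Nontrivial H] {A : H →L[ℂ] H} (hA : IsSelfAdjoint A) {z : ℂ}
    (hz : z ∉ spectrum ℂ A) :
    IsUnit (A - z • (1 : H →L[ℂ] H)) ∧
    ‖Ring.inverse (A - z • (1 : H →L[ℂ] H))‖ ≤ (Metric.infDist z (spectrum ℂ A))⁻¹ := by
  have halg : algebraMap ℂ (H →L[ℂ] H) z = z • (1 : H →L[ℂ] H) :=
    Algebra.algebraMap_eq_smul_one z
  have hu0 : IsUnit (algebraMap ℂ (H →L[ℂ] H) z - A) := spectrum.notMem_iff.mp hz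
  have hu : IsUnit (A - z • (1 : H →L[ℂ] H)) := by
    rw [← halg, ← neg_sub]; exact hu0.neg
  refine ⟨hu, ?_⟩
  obtain ⟨u, huval⟩ := hu
  have hstar : star ((u : H →L[ℂ] H)) = A - (starRingEnd ℂ z) • (1 : H →L[ℂ] H) := by
    rw [huval]; simp [star_sub, star_smul, hA.star_eq, Complex.star_def]
  have hcomm : (u : H →L[ℂ] H) * star ((u : H →L[ℂ] H))
      = star ((u : H →L[ℂ] H)) * (u : H →L[ℂ] H) := by
    rw [hstar, huval]
    simp only [sub_mul, mul_sub, smul_mul_assoc, mul_smul_comm, one_mul, mul_one, smul_smul,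
      smul_sub]
    rw [mul_comm z ((starRingEnd ℂ) z)]
    abel
  haveI : IsStarNormal ((u⁻¹ : (H →L[ℂ] H)ˣ) : H →L[ℂ] H) := by
    constructor
    set a := (u : H →L[ℂ] H) with ha
    set b := ((u⁻¹ : (H →L[ℂ] H)ˣ) : H →L[ℂ] H) with hb
    have hab : a * b = 1 := u.mul_inv
    have hba : b * a = 1 := u.inv_mul
    have step1 : b * star a = star a * b := sandwich_comm hab hba hcomm
    have step2 : a * star b = star b * a := by
      have := congrArg star step1
      simpa only [star_mul, star_star] using this
    have step3 : b * star b = star b * b := sandwich_comm hab hba step2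
    exact step3.symm
  have hRinv : Ring.inverse (A - z • (1 : H →L[ℂ] H)) = ((u⁻¹ : (H →L[ℂ] H)ˣ) : H →L[ℂ] H) := by
    rw [← huval, Ring.inverse_unit]
  rw [hRinv]
  set d := Metric.infDist z (spectrum ℂ A) with hd
  have hdpos : 0 < d := by
    rw [hd]
    exact ((spectrum.isClosed (𝕜 := ℂ) A).notMem_iff_infDist_pos (spectrum.nonempty A)).mp hz
  set D : NNReal := ⟨d⁻¹, by positivity⟩ with hD
  have key : ∀ k ∈ spectrum ℂ ((u⁻¹ : (H →L[ℂ] H)ˣ) : H →L[ℂ] H), ‖k‖₊ ≤ D := by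
    intro k hk
    have hk0 : k ≠ 0 := by
      rintro rfl
      exact spectrum.zero_notMem ℂ (u⁻¹).isUnit hk
    have hkinv : k⁻¹ ∈ spectrum ℂ ((u : H →L[ℂ] H)) :=
      spectrum.inv₀_mem_iff.mpr hk
    rw [huval, ← halg, ← spectrum.sub_singleton_eq] at hkinv
    obtain ⟨lam, hlam, w, hw, hlw⟩ := Set.mem_sub.mp hkinv
    rw [Set.mem_singleton_iff] at hw
    rw [hw] at hlw
    have hdist : d ≤ ‖k⁻¹‖ := by
      calc d ≤ dist z lam := Metric.infDist_le_dist_of_mem hlam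
        _ = ‖lam - z‖ := by rw [dist_eq_norm, norm_sub_rev]
        _ = ‖k⁻¹‖ := by rw [hlw]
    have hknorm : 0 < ‖k‖ := norm_pos_iff.mpr hk0
    have : ‖k‖ ≤ d⁻¹ := by
      rw [norm_inv] at hdist
      rw [← inv_inv ‖k‖]
      exact inv_anti₀ hdpos hdist
    rw [← NNReal.coe_le_coe, coe_nnnorm]; exact this
  have hsr : spectralRadius ℂ ((u⁻¹ : (H →L[ℂ] H)ˣ) : H →L[ℂ] H) ≤ (D : ENNReal) := by
    rw [spectralRadius]
    exact iSup₂_le fun k hk => ENNReal.coe_le_coe.mpr (key k hk)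
  rw [IsStarNormal.spectralRadius_eq_nnnorm] at hsr
  have : ‖((u⁻¹ : (H →L[ℂ] H)ˣ) : H →L[ℂ] H)‖₊ ≤ D := ENNReal.coe_le_coe.mp hsr
  have := NNReal.coe_le_coe.mpr this
  rwa [coe_nnnorm] at this

/-- Perturbation of an invertible element, with bound on the inverse. -/
lemma inverse_add_bound {B : Type*} [NormedRing B] [NormOneClass B] [CompleteSpace B]
    {a x : B} (ha : IsUnit a) {C r : ℝ}
    (hC : ‖Ring.inverse a‖ ≤ C) (hx : ‖x‖ ≤ r) (hrC : C * r < 1) :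
    IsUnit (a + x) ∧ ‖Ring.inverse (a + x)‖ ≤ C / (1 - C * r) := by
  have hC0 : 0 ≤ C := le_trans (norm_nonneg _) hC
  obtain ⟨u, rfl⟩ := ha
  rw [Ring.inverse_unit] at hC
  set t : B := -(((u⁻¹ : Bˣ) : B) * x) with ht
  have htn : ‖t‖ ≤ C * r := by
    rw [ht, norm_neg]
    refine le_trans (norm_mul_le _ _) (mul_le_mul hC hx (norm_nonneg _) hC0)
  have ht1 : ‖t‖ < 1 := lt_of_le_of_lt htn hrC
  set v : Bˣ := u * Units.oneSub t ht1 with hv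
  have hval : (v : B) = (u : B) + x := by
    rw [hv, Units.val_mul, Units.val_oneSub, ht, sub_neg_eq_add, mul_add, mul_one,
      ← mul_assoc, u.mul_inv, one_mul]
  refine ⟨⟨v.copy ((u:B)+x) hval.symm _ rfl, rfl⟩, ?_⟩
  have hinv : Ring.inverse ((u : B) + x) = ((v⁻¹ : Bˣ) : B) := by
    rw [← hval, Ring.inverse_unit]
  rw [hinv, hv, mul_inv_rev, Units.val_mul]
  have h1 : ‖(((Units.oneSub t ht1)⁻¹ : Bˣ) : B)‖ ≤ (1 - C * r)⁻¹ := by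
    have heq : (((Units.oneSub t ht1)⁻¹ : Bˣ) : B) = ∑' n : ℕ, t ^ n := rfl
    rw [heq]
    calc ‖∑' n : ℕ, t ^ n‖ ≤ ‖(1:B)‖ - 1 + (1 - ‖t‖)⁻¹ := tsum_geometric_le_of_norm_lt_one t ht1
      _ = (1 - ‖t‖)⁻¹ := by rw [norm_one]; ring
      _ ≤ (1 - C * r)⁻¹ := inv_anti₀ (by linarith) (by linarith)
  calc ‖(((Units.oneSub t ht1)⁻¹ : Bˣ) : B) * ((u⁻¹ : Bˣ) : B)‖
      ≤ ‖(((Units.oneSub t ht1)⁻¹ : Bˣ) : B)‖ * ‖((u⁻¹ : Bˣ) : B)‖ := norm_mul_le _ _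
    _ ≤ (1 - C * r)⁻¹ * C :=
        mul_le_mul h1 hC (norm_nonneg _) (inv_nonneg.mpr (by linarith))
    _ = C / (1 - C * r) := by rw [div_eq_mul_inv, mul_comm]

/-- `W(z)` is boundedly invertible for `dist(z, σ(A)) ≤ d₀/2`. -/
theorem statement4 (A : H →L[ℂ] H) (hA : IsSelfAdjoint A)
    (γ : ℝ → ℂ) (hγ : ContDiffOn ℝ 1 γ (Set.Icc 0 1))
    (hΓ : ∀ t ∈ Set.Icc (0:ℝ) 1, γ t ∉ spectrum ℂ A)
    (K : ℂ → H →L[ℂ] H) (hK : ContinuousOn (fun t => K (γ t)) (Set.Icc 0 1))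
    (hV : curveVar K γ < (curveDist A γ) ^ 2 / 4)
    (X : H →L[ℂ] H) (hXn : ‖X‖ ≤ rMin A K γ)
    (hXσ : Disjoint (spectrum ℂ (A + X)) (γ '' Set.Icc (0:ℝ) 1))
    (hX : X = Vmap K γ (A + X)) :
    ∀ z : ℂ, Metric.infDist z (spectrum ℂ A) ≤ curveDist A γ / 2 →
      IsUnit (Wfun K γ (A + X) z) := by
  intro z hz
  rcases subsingleton_or_nontrivial H with hsub | hnt
  · haveI : Subsingleton (H →L[ℂ] H) :=
      ⟨fun f g => ContinuousLinearMap.ext fun x => Subsingleton.elim _ _⟩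
    exact isUnit_of_subsingleton _
  -- notation
  set d := curveDist A γ with hdd
  set V₀ := curveVar K γ with hVV
  set r := rMin A K γ with hrr
  set s := Real.sqrt (d ^ 2 / 4 - V₀) with hss
  -- basic facts
  have hγc : ContinuousOn γ (Set.Icc 0 1) := hγ.continuousOn
  have hd_le : ∀ t ∈ Set.Icc (0:ℝ) 1, d ≤ Metric.infDist (γ t) (spectrum ℂ A) := by
    intro t ht
    exact ciInf_le ⟨0, by rintro _ ⟨u, rfl⟩; exact Metric.infDist_nonneg⟩
      (⟨t, ht⟩ : Set.Icc (0:ℝ) 1)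
  have hd0 : 0 < d := by
    have hfc : ContinuousOn (fun t => Metric.infDist (γ t) (spectrum ℂ A)) (Set.Icc 0 1) :=
      (continuous_infDist_pt _).comp_continuousOn hγc
    obtain ⟨t₀, ht₀, hmin⟩ := isCompact_Icc.exists_isMinOn ⟨0, by norm_num⟩ hfc
    have h1 : 0 < Metric.infDist (γ t₀) (spectrum ℂ A) :=
      ((spectrum.isClosed (𝕜 := ℂ) A).notMem_iff_infDist_pos (spectrum.nonempty A)).mp
        (hΓ t₀ ht₀)
    exact lt_of_lt_of_le h1 (le_ciInf fun t => isMinOn_iff.mp hmin t t.2)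
  have hV0 : 0 ≤ V₀ := by
    rw [hVV, curveVar]
    exact intervalIntegral.integral_nonneg zero_le_one (fun t ht => by positivity)
  have hs0 : 0 < s := Real.sqrt_pos.mpr (by rw [hVV] at hV ⊢; linarith)
  have hssq : s ^ 2 = d ^ 2 / 4 - V₀ := Real.sq_sqrt (by linarith)
  have hsd : s ≤ d / 2 := by nlinarith
  have hr_eq : r = d / 2 - s := rfl
  have hr0 : 0 ≤ r := by rw [hr_eq]; linarith
  have hrd : r < d := by rw [hr_eq]; linarith
  have hdr : 0 < d - r := by linarith
  -- resolvent bound along the curve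
  have hres : ∀ t ∈ Set.Icc (0:ℝ) 1, IsUnit ((A + X) - γ t • (1 : H →L[ℂ] H)) ∧
      ‖Ring.inverse ((A + X) - γ t • (1 : H →L[ℂ] H))‖ ≤ (d - r)⁻¹ := by
    intro t ht
    obtain ⟨hu, hb⟩ := resolvent_bound hA (hΓ t ht)
    have hb' : ‖Ring.inverse (A - γ t • (1 : H →L[ℂ] H))‖ ≤ d⁻¹ :=
      le_trans hb (inv_anti₀ hd0 (hd_le t ht))
    have hCr : d⁻¹ * r < 1 := by
      rw [inv_mul_lt_iff₀ hd0, mul_one]; exact hrd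
    obtain ⟨hu2, hb2⟩ := inverse_add_bound hu hb' hXn hCr
    have heq : A - γ t • (1 : H →L[ℂ] H) + X = (A + X) - γ t • (1 : H →L[ℂ] H) := by abel
    rw [heq] at hu2 hb2
    refine ⟨hu2, le_trans hb2 (le_of_eq ?_)⟩
    have hd' : d ≠ 0 := hd0.ne'
    have hdr' : d - r ≠ 0 := hdr.ne'
    have h1r : (0:ℝ) < 1 - d⁻¹ * r := by
      have : d⁻¹ * r < 1 := by rw [inv_mul_lt_iff₀ hd0, mul_one]; exact hrd
      linarith
    field_simp
  -- distance from γ t to z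
  have hγz : ∀ t ∈ Set.Icc (0:ℝ) 1, d / 2 ≤ ‖γ t - z‖ := by
    intro t ht
    have h1 : Metric.infDist (γ t) (spectrum ℂ A)
        ≤ Metric.infDist z (spectrum ℂ A) + dist (γ t) z :=
      Metric.infDist_le_infDist_add_dist
    rw [dist_eq_norm] at h1
    have := hd_le t ht
    linarith
  -- the integrand and its bound
  set F : ℝ → H →L[ℂ] H := fun t => (derivWithin γ (Set.Icc 0 1) t * (γ t - z)⁻¹) •
    (K (γ t) ∘L Ring.inverse ((A + X) - γ t • (1 : H →L[ℂ] H))) with hF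
  set g : ℝ → ℝ := fun t =>
    (d / 2)⁻¹ * (d - r)⁻¹ * (‖derivWithin γ (Set.Icc 0 1) t‖ * ‖K (γ t)‖) with hg
  have hgc : ContinuousOn g (Set.Icc 0 1) := by
    apply continuousOn_const.mul
    exact ((hγ.continuousOn_derivWithin (uniqueDiffOn_Icc zero_lt_one) le_rfl).norm).mul hK.norm
  have hgint : IntervalIntegrable g volume 0 1 := by
    apply ContinuousOn.intervalIntegrable
    rwa [Set.uIcc_of_le zero_le_one]
  have hFbound : ∀ t ∈ Set.Icc (0:ℝ) 1, ‖F t‖ ≤ g t := by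
    intro t ht
    have h1 : ‖(γ t - z)⁻¹‖ ≤ (d / 2)⁻¹ := by
      rw [norm_inv]
      exact inv_anti₀ (by linarith) (hγz t ht)
    have h2 := (hres t ht).2
    calc ‖F t‖ = ‖derivWithin γ (Set.Icc 0 1) t * (γ t - z)⁻¹‖ *
          ‖K (γ t) ∘L Ring.inverse ((A + X) - γ t • (1 : H →L[ℂ] H))‖ := norm_smul _ _
      _ ≤ (‖derivWithin γ (Set.Icc 0 1) t‖ * (d / 2)⁻¹) *
          (‖K (γ t)‖ * (d - r)⁻¹) := by
          refine mul_le_mul ?_ ?_ (norm_nonneg _) (by positivity)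
          · refine le_trans (norm_mul_le _ _) ?_
            exact mul_le_mul_of_nonneg_left h1 (norm_nonneg _)
          · exact le_trans (ContinuousLinearMap.opNorm_comp_le _ _)
              (mul_le_mul_of_nonneg_left h2 (norm_nonneg _))
      _ = g t := by rw [hg]; ring
  -- norm of the integral
  have hT : ‖∫ t in (0:ℝ)..1, F t‖ ≤ ∫ t in (0:ℝ)..1, g t := by
    have hae : ∀ᵐ t ∂volume, t ∈ Set.Ioc (0:ℝ) 1 → ‖F t‖ ≤ g t :=
      Filter.Eventually.of_forall fun t ht => hFbound t ⟨le_of_lt ht.1, ht.2⟩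
    exact intervalIntegral.norm_integral_le_of_norm_le zero_le_one hae hgint
  have hgeq : (∫ t in (0:ℝ)..1, g t) = (d / 2)⁻¹ * (d - r)⁻¹ * V₀ := by
    rw [hg, hVV, curveVar, ← intervalIntegral.integral_const_mul]
  have hlt : (d / 2)⁻¹ * (d - r)⁻¹ * V₀ < 1 := by
    have hprod : (d / 2)⁻¹ * (d - r)⁻¹ * V₀ = V₀ / ((d / 2) * (d - r)) := by
      field_simp
    rw [hprod, div_lt_one (by positivity)]
    nlinarith [mul_pos hd0 hs0]
  -- conclusion
  have hTnorm : ‖∫ t in (0:ℝ)..1, F t‖ < 1 := by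
    rw [hgeq] at hT; linarith
  have := isUnit_one_sub_of_norm_lt_one hTnorm
  rw [Wfun]
  exact this

end
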